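/- arXiv:1901.03827 — 5 statements merged into one kernel-verified Lean document; each statement's English description precedes it below -/
import Mathlib

section
/- Let p > 2 and p' = p/(p-1), and define u : ℝ^d → ℝ by u(x) = |x|^{p'}. Then u is continuously differentiable, its gradient satisfies |∇u(x) − ∇u(0)| = p' |x|^{1/(p-1)} for every x, so ∇u is Hölder continuous with exponent 1/(p-1) on every bounded set; moreover, for every α with 1/(p-1) < α ≤ 1 and every r > 0, sup_{x ∈ B_r, x ≠ 0} |∇u(x) − ∇u(0)| / |x|^α = +∞, i.e. ∇u is not α-Hölder continuous on any neighborhood of the origin. Hence the exponent 1/(p-1) in the C^{p'}-regularity theorem is optimal. -/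
open Metric Real

noncomputable section

/-- The model function `u(x) = |x|^{p'}` on `ℝ^d`, with `p' = p/(p-1)`. -/
def modelFun (d : ℕ) (p : ℝ) (x : EuclideanSpace ℝ (Fin d)) : ℝ :=
  ‖x‖ ^ (p / (p - 1))

private lemma scalar_holder {s t : ℝ} (hs0 : 0 < s) (hs1 : s ≤ 1) (ht0 : 0 ≤ t)
    (ht1 : t ≤ 1) : t ^ s - t ≤ (1 - t) ^ s := by
  have hts : t ^ s ≤ 1 := Real.rpow_le_one ht0 ht1 hs0.le
  have h1 : t ^ s - t ≤ t ^ s * (1 - t) := by nlinarith [Real.rpow_nonneg ht0 s]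
  have h2 : t ^ s * (1 - t) ≤ 1 - t := by nlinarith
  rcases eq_or_lt_of_le ht1 with h | h
  · subst h
    simp [Real.zero_rpow hs0.ne']
  · have h3 : (1 - t) ^ (1:ℝ) ≤ (1 - t) ^ s :=
      Real.rpow_le_rpow_of_exponent_ge (by linarith) (by linarith) hs1
    rw [Real.rpow_one] at h3
    linarith

private lemma norm_rpow_smul {E : Type*} [NormedAddCommGroup E] [NormedSpace ℝ E]
    {s : ℝ} (hs0 : 0 < s) (x : E) : ‖(‖x‖ ^ (s - 1)) • x‖ = ‖x‖ ^ s := by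
  rw [norm_smul, Real.norm_eq_abs, abs_of_nonneg (Real.rpow_nonneg (norm_nonneg x) _)]
  rcases eq_or_lt_of_le (norm_nonneg x) with h | h
  · rw [← h, mul_zero, Real.zero_rpow hs0.ne']
  · rw [← Real.rpow_add_one h.ne']
    ring_nf

private lemma holder_key {E : Type*} [NormedAddCommGroup E] [NormedSpace ℝ E]
    {s : ℝ} (hs0 : 0 < s) (hs1 : s ≤ 1) (x y : E) :
    ‖(‖x‖ ^ (s - 1)) • x - (‖y‖ ^ (s - 1)) • y‖ ≤ 2 * ‖x - y‖ ^ s := by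
  wlog hba : ‖y‖ ≤ ‖x‖ generalizing x y
  · rw [norm_sub_rev, norm_sub_rev x y]
    exact this y x (le_of_not_ge hba)
  by_cases hxy : x = y
  · simp [hxy]
    positivity
  have hd0 : 0 < ‖x - y‖ := by
    rw [norm_pos_iff]; exact sub_ne_zero.mpr hxy
  rcases le_or_gt ‖x‖ ‖x - y‖ with ha | ha
  · calc ‖(‖x‖ ^ (s - 1)) • x - (‖y‖ ^ (s - 1)) • y‖
        ≤ ‖(‖x‖ ^ (s - 1)) • x‖ + ‖(‖y‖ ^ (s - 1)) • y‖ := norm_sub_le _ _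
      _ = ‖x‖ ^ s + ‖y‖ ^ s := by rw [norm_rpow_smul hs0, norm_rpow_smul hs0]
      _ ≤ ‖x - y‖ ^ s + ‖x - y‖ ^ s :=
          add_le_add (Real.rpow_le_rpow (norm_nonneg _) ha hs0.le)
            (Real.rpow_le_rpow (norm_nonneg _) (hba.trans ha) hs0.le)
      _ = 2 * ‖x - y‖ ^ s := by ring
  · -- ‖x - y‖ < ‖x‖, so x ≠ 0
    have hx0 : (0:ℝ) < ‖x‖ := hd0.trans ha
    have hsplit : (‖x‖ ^ (s - 1)) • x - (‖y‖ ^ (s - 1)) • y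
        = (‖x‖ ^ (s - 1)) • (x - y) + (‖x‖ ^ (s - 1) - ‖y‖ ^ (s - 1)) • y := by
      rw [smul_sub, sub_smul]; abel
    have hterm1 : ‖(‖x‖ ^ (s - 1)) • (x - y)‖ ≤ ‖x - y‖ ^ s := by
      rw [norm_smul, Real.norm_eq_abs, abs_of_nonneg (Real.rpow_nonneg (norm_nonneg x) _)]
      have : ‖x‖ ^ (s - 1) ≤ ‖x - y‖ ^ (s - 1) :=
        Real.rpow_le_rpow_of_nonpos hd0 ha.le (by linarith)
      calc ‖x‖ ^ (s - 1) * ‖x - y‖ ≤ ‖x - y‖ ^ (s - 1) * ‖x - y‖ := by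
            gcongr
        _ = ‖x - y‖ ^ s := by rw [← Real.rpow_add_one hd0.ne']; ring_nf
    have hterm2 : ‖(‖x‖ ^ (s - 1) - ‖y‖ ^ (s - 1)) • y‖ ≤ ‖x - y‖ ^ s := by
      rcases eq_or_lt_of_le (norm_nonneg y) with hy0 | hy0
      · have hy : y = 0 := by rw [← norm_eq_zero, ← hy0]
        simp only [hy, smul_zero, norm_zero]
        positivity
      · rw [norm_smul, Real.norm_eq_abs]
        set a := ‖x‖; set b := ‖y‖
        have hab : b ≤ a := hba
        have habs : |a ^ (s - 1) - b ^ (s - 1)| = b ^ (s - 1) - a ^ (s - 1) := by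
          rw [abs_sub_comm, abs_of_nonneg]
          have := Real.rpow_le_rpow_of_nonpos hy0 hab (show s - 1 ≤ 0 by linarith)
          linarith
        rw [habs]
        -- (b^{s-1} - a^{s-1}) * b ≤ (a - b)^s ≤ ‖x-y‖^s
        have key : (b ^ (s - 1) - a ^ (s - 1)) * b ≤ (a - b) ^ s := by
          set t := b / a with htdef
          have ht0 : 0 ≤ t := div_nonneg hy0.le hx0.le
          have ht1 : t ≤ 1 := (div_le_one hx0).mpr hab
          have hbt : b = a * t := by rw [htdef]; field_simp
          have e1 : b ^ s = a ^ s * t ^ s := by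
            rw [hbt, Real.mul_rpow hx0.le ht0]
          have e2 : b ^ (s - 1) * b = b ^ s := by
            rw [← Real.rpow_add_one hy0.ne']; ring_nf
          have e3 : a ^ (s - 1) * b = a ^ s * t := by
            rw [hbt, ← mul_assoc, ← Real.rpow_add_one hx0.ne']; ring_nf
          have e4 : (a - b) ^ s = a ^ s * (1 - t) ^ s := by
            rw [hbt, show a - a * t = a * (1 - t) by ring,
              Real.mul_rpow hx0.le (by linarith)]
          have hsc := scalar_holder hs0 hs1 ht0 ht1
          have has : (0:ℝ) ≤ a ^ s := Real.rpow_nonneg hx0.le s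
          nlinarith [e1, e2, e3, e4]
        have hab2 : a - b ≤ ‖x - y‖ := by
          have := norm_sub_norm_le x y; linarith
        calc (b ^ (s - 1) - a ^ (s - 1)) * b ≤ (a - b) ^ s := key
          _ ≤ ‖x - y‖ ^ s := Real.rpow_le_rpow (by linarith) hab2 hs0.le
    calc ‖(‖x‖ ^ (s - 1)) • x - (‖y‖ ^ (s - 1)) • y‖
        ≤ ‖(‖x‖ ^ (s - 1)) • (x - y)‖ + ‖(‖x‖ ^ (s - 1) - ‖y‖ ^ (s - 1)) • y‖ := by
          rw [hsplit]; exact norm_add_le _ _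
      _ ≤ ‖x - y‖ ^ s + ‖x - y‖ ^ s := add_le_add hterm1 hterm2
      _ = 2 * ‖x - y‖ ^ s := by ring

private lemma grad_norm_rpow {E : Type*} [NormedAddCommGroup E] [InnerProductSpace ℝ E]
    [CompleteSpace E] {q : ℝ} (hq : 1 < q) (x : E) :
    gradient (fun x : E => ‖x‖ ^ q) x = (q * ‖x‖ ^ (q - 2)) • x := by
  have h := hasFDerivAt_norm_rpow x hq
  have h2 : HasGradientAt (fun x : E => ‖x‖ ^ q) ((q * ‖x‖ ^ (q - 2)) • x) x := by
    rw [hasGradientAt_iff_hasFDerivAt]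
    convert h using 1
    ext y
    simp only [InnerProductSpace.toDual_apply_apply, ContinuousLinearMap.smul_apply,
      innerSL_apply_apply, real_inner_smul_left, smul_eq_mul]
    ext y
    simp only [InnerProductSpace.toDual_apply_apply, ContinuousLinearMap.smul_apply,
      innerSL_apply_apply, real_inner_smul_left, smul_eq_mul]
  exact h2.gradient

/-- **Optimality of the exponent `1/(p-1)`** (Section 1).
Let `p > 2`, `p' = p/(p-1)` and `u(x) = |x|^{p'}` on `ℝ^d`.  Then `u` is
continuously differentiable, `|∇u(x) - ∇u(0)| = p' |x|^{1/(p-1)}` for every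
`x`, so `∇u` is `1/(p-1)`-Hölder continuous on every bounded set; moreover, for
every `α ∈ (1/(p-1), 1]` and every `r > 0`, `∇u` fails to be `α`-Hölder
continuous near the origin:
`sup_{x ∈ B_r, x ≠ 0} |∇u(x) - ∇u(0)|/|x|^α = +∞`. -/
theorem model_function_optimality (p : ℝ) (hp : 2 < p) (d : ℕ) (hd : 1 ≤ d) :
    ContDiff ℝ 1 (modelFun d p) ∧
    (∀ x : EuclideanSpace ℝ (Fin d),
      ‖gradient (modelFun d p) x - gradient (modelFun d p) 0‖ =
        (p / (p - 1)) * ‖x‖ ^ (1 / (p - 1))) ∧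
    (∀ A : Set (EuclideanSpace ℝ (Fin d)), Bornology.IsBounded A →
      ∃ C : ℝ, ∀ x ∈ A, ∀ y ∈ A,
        ‖gradient (modelFun d p) x - gradient (modelFun d p) y‖ ≤
          C * ‖x - y‖ ^ (1 / (p - 1))) ∧
    (∀ α : ℝ, 1 / (p - 1) < α → α ≤ 1 → ∀ r : ℝ, 0 < r →
      ¬∃ C : ℝ, ∀ x ∈ ball (0 : EuclideanSpace ℝ (Fin d)) r, x ≠ 0 →
        ‖gradient (modelFun d p) x - gradient (modelFun d p) 0‖ ≤ C * ‖x‖ ^ α) := by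
  have hp1 : (0:ℝ) < p - 1 := by linarith
  set q : ℝ := p / (p - 1) with hqdef
  have hq1 : 1 < q := by rw [hqdef, lt_div_iff₀ hp1]; linarith
  have hq0 : 0 < q := by linarith
  set s : ℝ := 1 / (p - 1) with hsdef
  have hs0 : 0 < s := by rw [hsdef]; positivity
  have hs1 : s ≤ 1 := by rw [hsdef, div_le_one hp1]; linarith
  have hqs : q - 1 = s := by rw [hqdef, hsdef]; field_simp; ring
  have hq2 : q - 2 = s - 1 := by linarith
  have hgrad : ∀ x : EuclideanSpace ℝ (Fin d),
      gradient (modelFun d p) x = (q * ‖x‖ ^ (q - 2)) • x := fun x => grad_norm_rpow hq1 x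
  have hgrad0 : gradient (modelFun d p) 0 = 0 := by rw [hgrad]; simp
  have hnorm : ∀ x : EuclideanSpace ℝ (Fin d),
      ‖gradient (modelFun d p) x - gradient (modelFun d p) 0‖ = q * ‖x‖ ^ s := by
    intro x
    rw [hgrad0, sub_zero, hgrad, norm_smul, Real.norm_eq_abs,
      abs_of_nonneg (mul_nonneg hq0.le (Real.rpow_nonneg (norm_nonneg x) _))]
    rcases eq_or_ne x 0 with rfl | hx
    · simp [Real.zero_rpow hs0.ne']
    · rw [hq2, mul_assoc, ← Real.rpow_add_one (norm_ne_zero_iff.mpr hx)]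
      ring_nf
  refine ⟨contDiff_norm_rpow hq1, hnorm, ?_, ?_⟩
  · -- Hölder continuity (in fact global, with constant 2q)
    intro A _
    refine ⟨2 * q, fun x _ y _ => ?_⟩
    rw [hgrad x, hgrad y, hq2]
    have hsplit : (q * ‖x‖ ^ (s - 1)) • x - (q * ‖y‖ ^ (s - 1)) • y
        = q • ((‖x‖ ^ (s - 1)) • x - (‖y‖ ^ (s - 1)) • y) := by
      rw [smul_sub, smul_smul, smul_smul]
    rw [hsplit, norm_smul, Real.norm_eq_abs, abs_of_pos hq0]
    have hh := holder_key hs0 hs1 x y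
    nlinarith [norm_nonneg ((‖x‖ ^ (s - 1)) • x - (‖y‖ ^ (s - 1)) • y),
      Real.rpow_nonneg (norm_nonneg (x - y)) s]
  · -- failure of α-Hölder continuity for α > s
    rintro α hαs hα1 r hr ⟨C, hC⟩
    have hαs' : 0 < α - s := by linarith
    set e : EuclideanSpace ℝ (Fin d) := EuclideanSpace.single (⟨0, hd⟩ : Fin d) (1:ℝ)
      with hedef
    have he : ‖e‖ = 1 := by
      rw [hedef, EuclideanSpace.norm_single, norm_one]
    have he0 : e ≠ 0 := by
      intro h; rw [h, norm_zero] at he; norm_num at he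
    have key : ∀ t : ℝ, 0 < t → t < r → q ≤ C * t ^ (α - s) := by
      intro t ht htr
      have hx : t • e ∈ ball (0 : EuclideanSpace ℝ (Fin d)) r := by
        rw [mem_ball_zero_iff, norm_smul, he, mul_one, Real.norm_eq_abs, abs_of_pos ht]
        exact htr
      have hx0 : t • e ≠ 0 := smul_ne_zero ht.ne' he0
      have h := hC (t • e) hx hx0
      rw [hnorm, norm_smul, he, mul_one, Real.norm_eq_abs, abs_of_pos ht] at h
      have hts : 0 < t ^ s := Real.rpow_pos_of_pos ht s
      have hsplit : t ^ α = t ^ (α - s) * t ^ s := by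
        rw [← Real.rpow_add ht]; ring_nf
      rw [hsplit, ← mul_assoc] at h
      exact le_of_mul_le_mul_right h hts
    have hcont := (Real.continuousAt_rpow_const 0 (α - s) (Or.inr hαs'.le))
    have htend : Filter.Tendsto (fun t : ℝ => C * t ^ (α - s))
        (nhdsWithin 0 (Set.Ioi 0)) (nhds 0) := by
      have h0 : C * (0:ℝ) ^ (α - s) = 0 := by
        rw [Real.zero_rpow hαs'.ne', mul_zero]
      simpa [h0] using ((hcont.tendsto).const_mul C).mono_left nhdsWithin_le_nhds
    have hev1 : ∀ᶠ t in nhdsWithin (0:ℝ) (Set.Ioi 0), C * t ^ (α - s) < q :=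
      htend.eventually (gt_mem_nhds hq0)
    have hev2 : ∀ᶠ t in nhdsWithin (0:ℝ) (Set.Ioi 0), t < r :=
      Filter.Eventually.filter_mono nhdsWithin_le_nhds (gt_mem_nhds hr)
    have hev3 : ∀ᶠ t in nhdsWithin (0:ℝ) (Set.Ioi 0), 0 < t :=
      eventually_mem_nhdsWithin
    obtain ⟨t, h1, h2, h3⟩ := (hev1.and (hev2.and hev3)).exists
    exact absurd (key t h3 h2) (not_le.mpr h1)
end
end

section
/- Let p > 2, let U ⊂ ℝ² be open, let u : U → ℝ be twice differentiable at x_0 ∈ U with ∇u(x_0) ≠ 0, and suppose u is classically p-harmonic at x_0, i.e. Δu(x_0) + (p-2) ⟨D²u(x_0) ∇u(x_0), ∇u(x_0)⟩ / |∇u(x_0)|² = 0. Identify ℝ² with ℂ via z = x + iy and let φ := ∂u/∂z = (u_x − i u_y)/2 be the complex gradient, with Wirtinger derivatives φ_z = (φ_x − i φ_y)/2 and φ_{z̄} = (φ_x + i φ_y)/2 (here φ_x, φ_y are partial derivatives of φ : U → ℂ). Then at x_0, φ(x_0) ≠ 0 and φ_{z̄}(x_0) = (1/p − 1/2) [ (conj(φ)/φ)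 φ_z + (φ/conj(φ)) conj(φ_z) ](x_0). -/
open Real

noncomputable section

/-- Partial derivative of `u : ℝ² → ℝ` in the `x`-direction. -/
def ux (u : ℝ × ℝ → ℝ) (x : ℝ × ℝ) : ℝ := fderiv ℝ u x (1, 0)

/-- Partial derivative of `u : ℝ² → ℝ` in the `y`-direction. -/
def uy (u : ℝ × ℝ → ℝ) (x : ℝ × ℝ) : ℝ := fderiv ℝ u x (0, 1)

/-- The complex gradient `φ = ∂u/∂z = (u_x - i u_y)/2` of `u : ℝ² → ℝ`. -/
def complexGradient (u : ℝ × ℝ → ℝ) (x : ℝ × ℝ) : ℂ :=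
  ((ux u x : ℂ) - Complex.I * (uy u x : ℂ)) / 2

/-- The Wirtinger derivative `∂φ/∂z = (φ_x - i φ_y)/2` of `φ : ℝ² → ℂ`. -/
def wirtingerZ (φ : ℝ × ℝ → ℂ) (x : ℝ × ℝ) : ℂ :=
  (fderiv ℝ φ x (1, 0) - Complex.I * fderiv ℝ φ x (0, 1)) / 2

/-- The Wirtinger derivative `∂φ/∂z̄ = (φ_x + i φ_y)/2` of `φ : ℝ² → ℂ`. -/
def wirtingerZBar (φ : ℝ × ℝ → ℂ) (x : ℝ × ℝ) : ℂ :=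
  (fderiv ℝ φ x (1, 0) + Complex.I * fderiv ℝ φ x (0, 1)) / 2

/-- The second derivative `D²u(x)[v,w]` of `u : ℝ² → ℝ`. -/
def secondDeriv (u : ℝ × ℝ → ℝ) (x v w : ℝ × ℝ) : ℝ :=
  fderiv ℝ (fderiv ℝ u) x v w

/-- `u` is classically `p`-harmonic at `x₀` (where `∇u(x₀) ≠ 0`):
`Δu(x₀) + (p-2) ⟨D²u(x₀) ∇u(x₀), ∇u(x₀)⟩ / |∇u(x₀)|² = 0`. -/
def ClassicallyPHarmonicAt (p : ℝ) (u : ℝ × ℝ → ℝ) (x₀ : ℝ × ℝ) : Prop :=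
  (secondDeriv u x₀ (1, 0) (1, 0) + secondDeriv u x₀ (0, 1) (0, 1)) +
    (p - 2) * secondDeriv u x₀ (ux u x₀, uy u x₀) (ux u x₀, uy u x₀) /
      ((ux u x₀) ^ 2 + (uy u x₀) ^ 2) = 0

/-- **The complex-gradient equation** (Section 2).
If `u : U → ℝ` (`U ⊂ ℝ²` open) is twice differentiable at `x₀ ∈ U` with
`∇u(x₀) ≠ 0` and is classically `p`-harmonic at `x₀`, then the complex
gradient `φ = (u_x - i u_y)/2` satisfies `φ(x₀) ≠ 0` and
`φ_{z̄} = (1/p - 1/2) [ (φ̄/φ) φ_z + (φ/φ̄) φ̄_z ]` at `x₀`. -/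
theorem complex_gradient_equation (p : ℝ) (hp : 2 < p)
    (U : Set (ℝ × ℝ)) (hU : IsOpen U) (x₀ : ℝ × ℝ) (hx₀ : x₀ ∈ U)
    (u : ℝ × ℝ → ℝ)
    (hdiff : ∀ x ∈ U, DifferentiableAt ℝ u x)
    (hdiff2 : DifferentiableAt ℝ (fderiv ℝ u) x₀)
    (hgrad : (ux u x₀, uy u x₀) ≠ (0, 0))
    (hpde : ClassicallyPHarmonicAt p u x₀) :
    complexGradient u x₀ ≠ 0 ∧
    wirtingerZBar (complexGradient u) x₀ =
      ((1 / p - 1 / 2 : ℝ) : ℂ) *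
        ((starRingEnd ℂ (complexGradient u x₀) / complexGradient u x₀) *
            wirtingerZ (complexGradient u) x₀ +
          (complexGradient u x₀ / starRingEnd ℂ (complexGradient u x₀)) *
            starRingEnd ℂ (wirtingerZ (complexGradient u) x₀)) := by
  set a := ux u x₀ with ha
  set b := uy u x₀ with hb
  set f₂ := fderiv ℝ (fderiv ℝ u) x₀ with hf₂
  set A := f₂ (1, 0) (1, 0) with hA
  set B := f₂ (1, 0) (0, 1) with hB
  set C := f₂ (0, 1) (0, 1) with hC
  -- gradient nonzero
  have hab : a ≠ 0 ∨ b ≠ 0 := by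
    by_contra h
    push_neg at h
    exact hgrad (by rw [h.1, h.2])
  have hab2 : a ^ 2 + b ^ 2 ≠ 0 := by
    rcases hab with h | h
    · positivity
    · positivity
  -- symmetry of second derivative
  have hsymm : f₂ (0, 1) (1, 0) = B := by
    rw [hB, hf₂]
    apply second_derivative_symmetric_of_eventually (f := u) (f' := fderiv ℝ u)
      ?_ hdiff2.hasFDerivAt (0,1) (1,0)
    filter_upwards [hU.mem_nhds hx₀] with y hy using (hdiff y hy).hasFDerivAt
  -- derivative of the complex gradient
  have h2 : ∀ v : ℝ × ℝ, HasFDerivAt (fun x => ((fderiv ℝ u x v : ℝ) : ℂ))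
      (Complex.ofRealCLM.comp ((ContinuousLinearMap.apply ℝ ℝ v).comp f₂)) x₀ :=
    fun v => Complex.ofRealCLM.hasFDerivAt.comp x₀
      ((ContinuousLinearMap.apply ℝ ℝ v).hasFDerivAt.comp x₀ hdiff2.hasFDerivAt)
  have hder : HasFDerivAt (complexGradient u)
      ((2⁻¹ : ℂ) • (Complex.ofRealCLM.comp ((ContinuousLinearMap.apply ℝ ℝ ((1:ℝ),(0:ℝ))).comp f₂)
        - Complex.I • Complex.ofRealCLM.comp ((ContinuousLinearMap.apply ℝ ℝ ((0:ℝ),(1:ℝ))).comp f₂))) x₀ := by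
    have heq : complexGradient u = fun x => (2⁻¹ : ℂ) *
        (((fderiv ℝ u x (1,0) : ℝ) : ℂ) - Complex.I * ((fderiv ℝ u x (0,1) : ℝ) : ℂ)) := by
      funext x
      simp only [complexGradient, ux, uy]
      ring
    rw [heq]
    exact ((h2 (1,0)).sub ((h2 (0,1)).const_mul Complex.I)).const_mul (2⁻¹ : ℂ)
  have key : ∀ v : ℝ × ℝ, fderiv ℝ (complexGradient u) x₀ v
      = ((f₂ v (1,0) : ℝ) - Complex.I * (f₂ v (0,1) : ℝ)) / 2 := by
    intro v
    rw [hder.fderiv]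
    simp [ContinuousLinearMap.smul_apply, ContinuousLinearMap.sub_apply,
      ContinuousLinearMap.comp_apply, ContinuousLinearMap.apply_apply]
    ring
  have hd1 : fderiv ℝ (complexGradient u) x₀ (1,0) = ((A : ℝ) - Complex.I * (B : ℝ)) / 2 := key (1,0)
  have hd2 : fderiv ℝ (complexGradient u) x₀ (0,1) = ((B : ℝ) - Complex.I * (C : ℝ)) / 2 := by
    rw [key (0,1), hsymm]
  have hφ0 : complexGradient u x₀ = ((a : ℝ) - Complex.I * (b : ℝ)) / 2 := rfl
  have hφ : ((a : ℝ) - Complex.I * (b : ℝ)) ≠ 0 := by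
    intro h
    rw [Complex.ext_iff] at h
    simp at h
    rcases hab with h' | h' <;> [exact h' h.1; exact h' h.2]
  have hφ' : ((a : ℝ) + Complex.I * (b : ℝ)) ≠ 0 := by
    intro h
    rw [Complex.ext_iff] at h
    simp at h
    rcases hab with h' | h' <;> [exact h' h.1; exact h' h.2]
  -- the PDE relation
  have hrel0 : (A + C) + (p - 2) * (f₂ (a, b) (a, b)) / (a ^ 2 + b ^ 2) = 0 := hpde
  have hvab : ((a, b) : ℝ × ℝ) = a • ((1:ℝ), (0:ℝ)) + b • ((0:ℝ), (1:ℝ)) := by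
    simp [Prod.ext_iff]
  have hbil : f₂ (a, b) (a, b) = a ^ 2 * A + 2 * (a * b) * B + b ^ 2 * C := by
    rw [hvab]
    simp only [map_add, map_smul, ContinuousLinearMap.add_apply,
      ContinuousLinearMap.smul_apply, smul_eq_mul]
    rw [hsymm]
    ring
  rw [hbil] at hrel0
  have hrel2 : (A + C) * (a ^ 2 + b ^ 2) + (p - 2) * (a ^ 2 * A + 2 * (a * b) * B + b ^ 2 * C) = 0 := by
    field_simp at hrel0
    linarith [hrel0]
  have hrel : p * ((A + C) * (a ^ 2 + b ^ 2))
      = (2 - p) * ((A - C) * (a ^ 2 - b ^ 2) + 4 * (a * b) * B) := by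
    linear_combination 2 * hrel2
  have hp0 : (p : ℂ) ≠ 0 := by
    have : p ≠ 0 := by linarith
    exact_mod_cast this
  have hrelC : (p : ℂ) * (((A:ℂ) + C) * ((a:ℂ) ^ 2 + (b:ℂ) ^ 2))
      = ((2:ℂ) - p) * (((A:ℂ) - C) * ((a:ℂ) ^ 2 - (b:ℂ) ^ 2) + 4 * ((a:ℂ) * b) * B) := by
    exact_mod_cast congrArg (Complex.ofReal) hrel
  refine ⟨by rw [hφ0]; exact div_ne_zero hφ two_ne_zero, ?_⟩
  rw [wirtingerZBar, wirtingerZ, hd1, hd2, hφ0]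
  simp only [map_div₀, map_sub, map_add, map_mul, Complex.conj_ofReal, Complex.conj_I, map_ofNat]
  push_cast
  field_simp [hφ, hφ', hp0]
  linear_combination (2:ℂ) * hrelC +
    (2*(p:ℂ)*(-(A:ℂ)*(b:ℂ)^2 - (C:ℂ)*(a:ℂ)^2 + (Complex.I^2 - 1)*(C:ℂ)*(b:ℂ)^2)
      - 2*(2-(p:ℂ))*((a:ℂ)^2*(C:ℂ) + (b:ℂ)^2*(A:ℂ) + (Complex.I^2 - 1)*(b:ℂ)^2*(C:ℂ)
        - 4*(a:ℂ)*(b:ℂ)*(B:ℂ))) * Complex.I_sq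
end
end

section
/- Let p > 2, let U ⊂ ℝ² be open, let u : U → ℝ be twice differentiable at x_0 ∈ U with ∇u(x_0) ≠ 0, and suppose Δu(x_0) + (p-2) ⟨D²u(x_0) ∇u(x_0), ∇u(x_0)⟩ / |∇u(x_0)|² = 0. Let φ := (u_x − i u_y)/2 be the complex gradient, with Wirtinger derivatives φ_z = (φ_x − i φ_y)/2 and φ_{z̄} = (φ_x + i φ_y)/2. Then at x_0, |φ_{z̄}(x_0)| ≤ (1 − 2/p) |φ_z(x_0)|; that is, the complex gradient of a planar p-harmonic function satisfies the distortion inequality of a (p-1)-quasiregular mapping at every non-critical point. -/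
open Real

noncomputable section

set_option maxHeartbeats 1600000 in
/-- **Quasiregularity of the complex gradient** (inequality (2.2) / (K-qr)).
If `u : U → ℝ` (`U ⊂ ℝ²` open) is twice differentiable at `x₀ ∈ U` with
`∇u(x₀) ≠ 0` and is classically `p`-harmonic at `x₀`, then the complex
gradient `φ = (u_x - i u_y)/2` satisfies the distortion inequality of a
`(p-1)`-quasiregular mapping at `x₀`: `|φ_{z̄}(x₀)| ≤ (1 - 2/p) |φ_z(x₀)|`. -/
theorem complex_gradient_quasiregular (p : ℝ) (hp : 2 < p)
    (U : Set (ℝ × ℝ)) (hU : IsOpen U) (x₀ : ℝ × ℝ) (hx₀ : x₀ ∈ U)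
    (u : ℝ × ℝ → ℝ)
    (hdiff : ∀ x ∈ U, DifferentiableAt ℝ u x)
    (hdiff2 : DifferentiableAt ℝ (fderiv ℝ u) x₀)
    (hgrad : (ux u x₀, uy u x₀) ≠ (0, 0))
    (hpde : ClassicallyPHarmonicAt p u x₀) :
    ‖wirtingerZBar (complexGradient u) x₀‖ ≤
      (1 - 2 / p) * ‖wirtingerZ (complexGradient u) x₀‖ := by
  set L := fderiv ℝ (fderiv ℝ u) x₀ with hL
  set a := ux u x₀ with ha
  set b := uy u x₀ with hb
  set A := L (1,0) (1,0) with hA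
  set B := L (1,0) (0,1) with hB
  set C := L (0,1) (0,1) with hC
  have h1 : ∀ᶠ y in nhds x₀, HasFDerivAt u (fderiv ℝ u y) y := by
    filter_upwards [hU.mem_nhds hx₀] with y hy using (hdiff y hy).hasFDerivAt
  have hsymm := second_derivative_symmetric_of_eventually h1 hdiff2.hasFDerivAt
  have hB' : L ((0:ℝ),(1:ℝ)) ((1:ℝ),(0:ℝ)) = B := hsymm (0,1) (1,0)
  -- derivatives of ux, uy
  have hux : HasFDerivAt (ux u) ((ContinuousLinearMap.apply ℝ ℝ ((1:ℝ),(0:ℝ))).comp L) x₀ :=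
    (ContinuousLinearMap.apply ℝ ℝ ((1:ℝ),(0:ℝ))).hasFDerivAt.comp x₀ hdiff2.hasFDerivAt
  have huy : HasFDerivAt (uy u) ((ContinuousLinearMap.apply ℝ ℝ ((0:ℝ),(1:ℝ))).comp L) x₀ :=
    (ContinuousLinearMap.apply ℝ ℝ ((0:ℝ),(1:ℝ))).hasFDerivAt.comp x₀ hdiff2.hasFDerivAt
  have hx' : HasFDerivAt (fun x => ((ux u x : ℝ) : ℂ))
      (Complex.ofRealCLM.comp ((ContinuousLinearMap.apply ℝ ℝ ((1:ℝ),(0:ℝ))).comp L)) x₀ :=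
    Complex.ofRealCLM.hasFDerivAt.comp x₀ hux
  have hy' : HasFDerivAt (fun x => ((uy u x : ℝ) : ℂ))
      (Complex.ofRealCLM.comp ((ContinuousLinearMap.apply ℝ ℝ ((0:ℝ),(1:ℝ))).comp L)) x₀ :=
    Complex.ofRealCLM.hasFDerivAt.comp x₀ huy
  have hφ : HasFDerivAt (complexGradient u)
      ((2:ℂ)⁻¹ • (Complex.ofRealCLM.comp ((ContinuousLinearMap.apply ℝ ℝ ((1:ℝ),(0:ℝ))).comp L)
        - Complex.I • Complex.ofRealCLM.comp ((ContinuousLinearMap.apply ℝ ℝ ((0:ℝ),(1:ℝ))).comp L))) x₀ := by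
    have hfun : complexGradient u = fun y => (2:ℂ)⁻¹ * ((ux u y : ℂ) - Complex.I * (uy u y : ℂ)) := by
      funext y; simp [complexGradient, div_eq_inv_mul]
    rw [hfun]
    exact (hx'.sub (hy'.const_mul Complex.I)).const_mul ((2:ℂ)⁻¹)
  have e1 : fderiv ℝ (complexGradient u) x₀ ((1:ℝ),(0:ℝ))
      = ((A : ℂ) - Complex.I * (B : ℂ)) / 2 := by
    rw [hφ.fderiv]; simp [div_eq_inv_mul, mul_sub, hA, hB]
  have e2 : fderiv ℝ (complexGradient u) x₀ ((0:ℝ),(1:ℝ))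
      = ((B : ℂ) - Complex.I * (C : ℂ)) / 2 := by
    rw [hφ.fderiv]; simp [div_eq_inv_mul, mul_sub, hB', hC]
  -- values of the Wirtinger derivatives
  have hzbar : wirtingerZBar (complexGradient u) x₀ = (((A + C : ℝ)) : ℂ) / 4 := by
    rw [wirtingerZBar, e1, e2]
    push_cast
    linear_combination (-(C:ℂ)/4) * Complex.I_sq
  have hz : wirtingerZ (complexGradient u) x₀
      = (((A - C) / 4 : ℝ) : ℂ) + ((-(B / 2) : ℝ) : ℂ) * Complex.I := by
    rw [wirtingerZ, e1, e2]
    push_cast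
    linear_combination ((C:ℂ)/4) * Complex.I_sq
  have hM : ‖wirtingerZBar (complexGradient u) x₀‖ = |A + C| / 4 := by
    rw [hzbar, show (((A + C : ℝ)) : ℂ) / 4 = (((A + C) / 4 : ℝ) : ℂ) by push_cast; ring,
      Complex.norm_real, Real.norm_eq_abs, abs_div]
    norm_num
  set n := ‖wirtingerZ (complexGradient u) x₀‖ with hn
  have hn0 : 0 ≤ n := norm_nonneg _
  have hn2 : n ^ 2 = ((A - C) / 4) ^ 2 + (B / 2) ^ 2 := by
    rw [hn, hz, Complex.norm_add_mul_I, Real.sq_sqrt (by positivity)]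
    ring
  -- bilinear expansion
  have hbil : L (a, b) (a, b) = a * a * A + 2 * (a * b) * B + b * b * C := by
    have hab : ((a, b) : ℝ × ℝ) = a • ((1:ℝ),(0:ℝ)) + b • ((0:ℝ),(1:ℝ)) := by
      simp [Prod.ext_iff]
    rw [hab]
    simp only [map_add, map_smul, ContinuousLinearMap.add_apply, ContinuousLinearMap.smul_apply,
      ContinuousLinearMap.coe_smul', Pi.smul_apply, smul_eq_mul]
    rw [hB']
    ring
  -- the PDE
  have hQ : secondDeriv u x₀ (a, b) (a, b) = a * a * A + 2 * (a * b) * B + b * b * C := hbil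
  have hpde' : (A + C) + (p - 2) * (a * a * A + 2 * (a * b) * B + b * b * C) / (a ^ 2 + b ^ 2) = 0 := by
    have h : (secondDeriv u x₀ (1, 0) (1, 0) + secondDeriv u x₀ (0, 1) (0, 1)) +
        (p - 2) * secondDeriv u x₀ (a, b) (a, b) / (a ^ 2 + b ^ 2) = 0 := hpde
    rwa [hQ, show secondDeriv u x₀ (1, 0) (1, 0) = A from rfl,
      show secondDeriv u x₀ (0, 1) (0, 1) = C from rfl] at h
  rw [hM]
  clear_value L a b A B C n
  clear hφ hx' hy' hux huy h1 hsymm e1 e2 hz hzbar hpde hdiff hdiff2 hM hQ hbil hB'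
  clear hL ha hb hA hB hC hU hx₀
  have hr : 0 < a ^ 2 + b ^ 2 := by
    by_contra hc
    push_neg at hc
    have ha0 : a = 0 := by nlinarith [sq_nonneg a, sq_nonneg b]
    have hb0 : b = 0 := by nlinarith [sq_nonneg a, sq_nonneg b]
    exact hgrad (by rw [ha0, hb0])
  have hkey : p * (A + C) * (a ^ 2 + b ^ 2)
      = -(p - 2) * ((A - C) * (a ^ 2 - b ^ 2) + 4 * (a * b) * B) := by
    have h2 : (p - 2) * (a * a * A + 2 * (a * b) * B + b * b * C) / (a ^ 2 + b ^ 2) = -(A + C) := by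
      linarith [hpde']
    rw [div_eq_iff hr.ne'] at h2
    linear_combination 2 * h2
  -- Cauchy-Schwarz
  have hCS : ((A - C) * (a ^ 2 - b ^ 2) + 4 * (a * b) * B) ^ 2
      ≤ ((A - C) ^ 2 + 4 * B ^ 2) * (a ^ 2 + b ^ 2) ^ 2 := by
    nlinarith [sq_nonneg ((A - C) * (2 * a * b) - 2 * B * (a ^ 2 - b ^ 2))]
  have hsq : (p * (A + C)) ^ 2 ≤ (p - 2) ^ 2 * ((A - C) ^ 2 + 4 * B ^ 2) := by
    have h2 : (p * (A + C) * (a ^ 2 + b ^ 2)) ^ 2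
        ≤ (p - 2) ^ 2 * ((A - C) ^ 2 + 4 * B ^ 2) * (a ^ 2 + b ^ 2) ^ 2 := by
      rw [hkey]
      nlinarith [hCS, sq_nonneg (p - 2)]
    nlinarith [h2, hr, sq_nonneg (p * (A + C)), mul_pos hr hr]
  have hm2 : (4 * n) ^ 2 = (A - C) ^ 2 + 4 * B ^ 2 := by
    rw [mul_pow, hn2]; ring
  have hfin : p * |A + C| ≤ (p - 2) * (4 * n) := by
    refine le_of_sq_le_sq ?_ (by nlinarith [hn0])
    have h3 : (p * |A + C|) ^ 2 = (p * (A + C)) ^ 2 := by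
      rw [mul_pow, mul_pow, sq_abs]
    rw [h3]
    calc (p * (A + C)) ^ 2 ≤ (p - 2) ^ 2 * ((A - C) ^ 2 + 4 * B ^ 2) := hsq
      _ = ((p - 2) * (4 * n)) ^ 2 := by rw [← hm2]; ring
  have hp0 : (0:ℝ) < p := by linarith
  rw [show (1:ℝ) - 2 / p = (p - 2) / p by field_simp]
  rw [div_mul_eq_mul_div, le_div_iff₀ hp0]
  nlinarith [hfin]
end
end

section
/- Let p > 2, let U ⊂ ℝ² be open, let u : U → ℝ be twice differentiable at x_0 ∈ U with ∇u(x_0) ≠ 0, and suppose Δu(x_0) + (p-2) ⟨D²u(x_0) ∇u(x_0), ∇u(x_0)⟩ / |∇u(x_0)|² = 0. Let φ := (u_x − i u_y)/2 be the complex gradient, regarded as a map U → ℝ², with Wirtinger derivatives φ_z = (φ_x − i φ_y)/2 and φ_{z̄} = (φ_x + i φ_y)/2, and let J_φ(x_0) denote the determinant of the real Jacobian matrix of φ at x_0 (so J_φ = |φ_z|² − |φ_{z̄}|²). Then J_φ(x_0) ≥ (1/(p-1)) ( |φ_z(x_0)|² + |φ_{z̄}(x_0)|² ). -/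
open Real

noncomputable section

set_option maxHeartbeats 2000000 in
/-- **Improved Jacobian bound for the complex gradient** (cf. Lemma 2.1 of
Baernstein–Kovalev).  If `u : U → ℝ` (`U ⊂ ℝ²` open) is twice differentiable
at `x₀ ∈ U` with `∇u(x₀) ≠ 0` and is classically `p`-harmonic at `x₀`, then
the Jacobian determinant `J_φ = |φ_z|² - |φ_{z̄}|²` of the complex gradient
`φ = (u_x - i u_y)/2`, regarded as a map `U → ℝ²`, satisfies
`J_φ(x₀) ≥ (1/(p-1)) (|φ_z(x₀)|² + |φ_{z̄}(x₀)|²) = (1/(p-1)) |∇φ(x₀)|²/2`. -/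
theorem complex_gradient_jacobian_bound (p : ℝ) (hp : 2 < p)
    (U : Set (ℝ × ℝ)) (hU : IsOpen U) (x₀ : ℝ × ℝ) (hx₀ : x₀ ∈ U)
    (u : ℝ × ℝ → ℝ)
    (hdiff : ∀ x ∈ U, DifferentiableAt ℝ u x)
    (hdiff2 : DifferentiableAt ℝ (fderiv ℝ u) x₀)
    (hgrad : (ux u x₀, uy u x₀) ≠ (0, 0))
    (hpde : ClassicallyPHarmonicAt p u x₀) :
    ‖wirtingerZ (complexGradient u) x₀‖ ^ 2 -
        ‖wirtingerZBar (complexGradient u) x₀‖ ^ 2 ≥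
      (1 / (p - 1)) *
        (‖wirtingerZ (complexGradient u) x₀‖ ^ 2 +
          ‖wirtingerZBar (complexGradient u) x₀‖ ^ 2) := by
  have key : ∀ x y : ℝ, ‖(x:ℂ) + (y:ℝ) * Complex.I‖ ^ 2 = x ^ 2 + y ^ 2 := by
    intro x y
    rw [Complex.sq_norm, Complex.normSq_apply]
    simp
    ring
  set D := fderiv ℝ (fderiv ℝ u) x₀ with hD
  have hg : ∀ w : ℝ × ℝ, HasFDerivAt (fun x => fderiv ℝ u x w) (D.flip w) x₀ := by
    intro w
    have := hdiff2.hasFDerivAt.clm_apply (hasFDerivAt_const w x₀)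
    simpa using this
  have h1 : HasFDerivAt (fun x => ((fderiv ℝ u x (1,0) : ℝ) : ℂ))
      (Complex.ofRealCLM.comp (D.flip (1,0))) x₀ :=
    Complex.ofRealCLM.hasFDerivAt.comp x₀ (hg (1,0))
  have h2 : HasFDerivAt (fun x => ((fderiv ℝ u x (0,1) : ℝ) : ℂ))
      (Complex.ofRealCLM.comp (D.flip (0,1))) x₀ :=
    Complex.ofRealCLM.hasFDerivAt.comp x₀ (hg (0,1))
  have h4 : HasFDerivAt (complexGradient u)
      ((2:ℂ)⁻¹ • (Complex.ofRealCLM.comp (D.flip (1,0)) -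
        Complex.I • Complex.ofRealCLM.comp (D.flip (0,1)))) x₀ := by
    convert (h1.sub (h2.const_mul Complex.I)).const_mul ((2:ℂ)⁻¹) using 1
    case e'_4 => rfl
    case e'_8 => rfl
    funext x
    simp [complexGradient, ux, uy, div_eq_inv_mul]
  have hφv : ∀ v : ℝ × ℝ, fderiv ℝ (complexGradient u) x₀ v =
      ((D v (1,0) : ℂ) - Complex.I * (D v (0,1))) / 2 := by
    intro v
    rw [h4.fderiv]
    simp [div_eq_inv_mul, mul_sub]
  set a := D (1,0) (1,0) with ha
  set b1 := D (1,0) (0,1) with hb1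
  set b2 := D (0,1) (1,0) with hb2
  set c := D (0,1) (0,1) with hc
  have hsymm : b1 = b2 := by
    have hev : ∀ᶠ y in nhds x₀, HasFDerivAt u (fderiv ℝ u y) y := by
      filter_upwards [hU.mem_nhds hx₀] with y hy using (hdiff y hy).hasFDerivAt
    exact second_derivative_symmetric_of_eventually hev hdiff2.hasFDerivAt (1,0) (0,1)
  have hZ : wirtingerZ (complexGradient u) x₀ =
      ((((a - c)/4 : ℝ)) : ℂ) + ((-(b1 + b2)/4 : ℝ) : ℂ) * Complex.I := by
    rw [wirtingerZ, hφv (1,0), hφv (0,1)]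
    push_cast
    ring_nf
    rw [Complex.I_sq]
    ring
  have hZbar : wirtingerZBar (complexGradient u) x₀ =
      ((((a + c)/4 : ℝ)) : ℂ) + (((b2 - b1)/4 : ℝ) : ℂ) * Complex.I := by
    rw [wirtingerZBar, hφv (1,0), hφv (0,1)]
    push_cast
    ring_nf
    rw [Complex.I_sq]
    ring
  have hnZ : ‖wirtingerZ (complexGradient u) x₀‖ ^ 2 =
      ((a - c)/4) ^ 2 + ((b1 + b2)/4) ^ 2 := by
    rw [hZ, key]
    ring
  have hnZbar : ‖wirtingerZBar (complexGradient u) x₀‖ ^ 2 =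
      ((a + c)/4) ^ 2 + ((b2 - b1)/4) ^ 2 := by
    rw [hZbar, key]
  -- gradient components
  set g1 := ux u x₀ with hg1
  set g2 := uy u x₀ with hg2
  have hN : 0 < g1 ^ 2 + g2 ^ 2 := by
    have h : g1 ≠ 0 ∨ g2 ≠ 0 := by
      by_contra h
      push_neg at h
      exact hgrad (by simp [hg1, hg2] at h ⊢; exact ⟨h.1, h.2⟩)
    rcases h with h | h
    · positivity
    · positivity
  -- expand the quadratic form
  have hvec : ((g1 : ℝ) • ((1:ℝ),(0:ℝ)) + (g2 : ℝ) • ((0:ℝ),(1:ℝ))) = (g1, g2) := by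
    simp [Prod.ext_iff]
  have hQ : secondDeriv u x₀ (g1, g2) (g1, g2) =
      a * g1 ^ 2 + b1 * g1 * g2 + b2 * g2 * g1 + c * g2 ^ 2 := by
    rw [secondDeriv, ← hD, ← hvec]
    simp only [map_add, map_smul, ContinuousLinearMap.add_apply,
      ContinuousLinearMap.coe_smul', Pi.smul_apply, smul_eq_mul]
    rw [ha, hb1, hb2, hc]
    ring
  -- the PDE
  rw [ClassicallyPHarmonicAt] at hpde
  rw [hQ] at hpde
  have hpde' : (a + c) + (p - 2) * (a * g1 ^ 2 + b1 * g1 * g2 + b2 * g2 * g1 + c * g2 ^ 2)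
      / (g1 ^ 2 + g2 ^ 2) = 0 := by
    have e1 : secondDeriv u x₀ (1,0) (1,0) = a := by rw [secondDeriv, ← hD, ha]
    have e2 : secondDeriv u x₀ (0,1) (0,1) = c := by rw [secondDeriv, ← hD, hc]
    rw [e1, e2] at hpde
    exact hpde
  have hQN : (a + c) * (g1 ^ 2 + g2 ^ 2)
      + (p - 2) * (a * g1 ^ 2 + b1 * g1 * g2 + b2 * g2 * g1 + c * g2 ^ 2) = 0 := by
    field_simp at hpde'
    linarith
  clear_value D a b1 b2 c g1 g2
  clear hφv h4 h1 h2 hg hZ hZbar hQ hpde hpde' hvec hgrad hdiff hdiff2 hU hx₀ hD ha hb1 hb2 hc hg1 hg2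
  clear D
  rw [hsymm] at hnZ hnZbar hQN
  set b := b2 with hb
  set N := g1 ^ 2 + g2 ^ 2 with hNdef
  clear_value N
  -- Cauchy–Schwarz / Rayleigh quotient bound
  have hCS : ((a - c)/2 * (g1^2 - g2^2) + b * (2*g1*g2)) ^ 2 ≤
      (((a - c)/2)^2 + b^2) * N ^ 2 := by
    have h := sq_nonneg ((a - c)/2 * (2*g1*g2) - b * (g1^2 - g2^2))
    have hxy : (g1^2 - g2^2)^2 + (2*g1*g2)^2 = N^2 := by rw [hNdef]; ring
    nlinarith [sq_nonneg ((a - c)/2 * (2*g1*g2) - b * (g1^2 - g2^2))]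
  -- key inequality : (a+c)^2 p^2 ≤ ((a-c)^2 + 4 b^2) (p-2)^2
  have hkey : (a + c) ^ 2 * p ^ 2 ≤ ((a - c) ^ 2 + 4 * b ^ 2) * (p - 2) ^ 2 := by
    have hp2 : (0:ℝ) < p - 2 := by linarith
    -- Q - s N as in the Rayleigh bound
    have hQs : a * g1 ^ 2 + b * g1 * g2 + b * g2 * g1 + c * g2 ^ 2 - (a + c)/2 * N
        = (a - c)/2 * (g1^2 - g2^2) + b * (2*g1*g2) := by rw [hNdef]; ring
    have hQval : a * g1 ^ 2 + b * g1 * g2 + b * g2 * g1 + c * g2 ^ 2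
        = -(a + c) * N / (p - 2) := by
      rw [eq_div_iff hp2.ne']
      linarith [hQN]
    have h1 : ((a + c) * N * p / (2 * (p - 2))) ^ 2 ≤ (((a - c)/2)^2 + b^2) * N ^ 2 := by
      have : (a - c)/2 * (g1^2 - g2^2) + b * (2*g1*g2)
          = -((a + c) * N * p / (2 * (p - 2))) := by
        rw [← hQs, hQval]
        field_simp
        ring
      rw [this] at hCS
      calc ((a + c) * N * p / (2 * (p - 2))) ^ 2
          = (-((a + c) * N * p / (2 * (p - 2)))) ^ 2 := by ring
        _ ≤ _ := hCS
    have hN2 : 0 < N ^ 2 := by positivity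
    rw [div_pow, div_le_iff₀ (by positivity)] at h1
    have h3 : ((a + c) ^ 2 * p ^ 2) * N ^ 2 ≤ (((a - c) ^ 2 + 4 * b ^ 2) * (p - 2) ^ 2) * N ^ 2 := by
      calc ((a + c) ^ 2 * p ^ 2) * N ^ 2 = ((a + c) * N * p) ^ 2 := by ring
        _ ≤ (((a - c)/2) ^ 2 + b ^ 2) * N ^ 2 * (2 * (p - 2)) ^ 2 := h1
        _ = (((a - c) ^ 2 + 4 * b ^ 2) * (p - 2) ^ 2) * N ^ 2 := by ring
    exact le_of_mul_le_mul_right h3 hN2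
  have hp2 : (0:ℝ) < p - 2 := by linarith
  have hp0 : (0:ℝ) < p := by linarith
  have hR : (0:ℝ) ≤ (a - c) ^ 2 + 4 * b ^ 2 := by positivity
  have h5 : ((a - c) ^ 2 + 4 * b ^ 2) * (p - 2) ^ 2 ≤ ((a - c) ^ 2 + 4 * b ^ 2) * (p - 2) * p := by
    nlinarith [mul_nonneg hR hp2.le]
  have h6 : (a + c) ^ 2 * p ≤ ((a - c) ^ 2 + 4 * b ^ 2) * (p - 2) := by
    have h6' : p * ((a + c) ^ 2 * p) ≤ p * (((a - c) ^ 2 + 4 * b ^ 2) * (p - 2)) := by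
      calc p * ((a + c) ^ 2 * p) = (a + c) ^ 2 * p ^ 2 := by ring
        _ ≤ ((a - c) ^ 2 + 4 * b ^ 2) * (p - 2) ^ 2 := hkey
        _ ≤ ((a - c) ^ 2 + 4 * b ^ 2) * (p - 2) * p := h5
        _ = p * (((a - c) ^ 2 + 4 * b ^ 2) * (p - 2)) := by ring
    exact (mul_le_mul_iff_right₀ hp0).mp h6'
  rw [hnZ, hnZbar]
  rw [ge_iff_le, one_div, inv_mul_le_iff₀ (by linarith : (0:ℝ) < p - 1)]
  nlinarith [h6]
end
end

section
/- For every p > 2, define α*(2,p) := (1/6) ( p/(p-1) + sqrt( 1 + 14/(p-1) + 1/(p-1)² ) ) and α(p) := (1/(2p)) ( −3 − 1/(p-1) + sqrt( 33 + 30/(p-1) + 1/(p-1)² ) ). Then the strict inequalities α*(2,p) > α(p) > 1/(p-1) hold. -/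
open Real

set_option maxHeartbeats 1600000

/-- **Comparison of the Hölder exponents** (inequality (2.4) / \eqref{alfi}).
For every `p > 2`, with
`α*(2,p) = (1/6)(p/(p-1) + √(1 + 14/(p-1) + 1/(p-1)²))` the Iwaniec–Manfredi
exponent and
`α(p) = (1/(2p))(-3 - 1/(p-1) + √(33 + 30/(p-1) + 1/(p-1)²))` the
Baernstein–Kovalev exponent, one has `α*(2,p) > α(p) > 1/(p-1)`. -/
theorem exponent_comparison (p : ℝ) (hp : 2 < p) :
    (1 / 6) * (p / (p - 1) + Real.sqrt (1 + 14 / (p - 1) + 1 / (p - 1) ^ 2)) >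
      (1 / (2 * p)) *
        (-3 - 1 / (p - 1) + Real.sqrt (33 + 30 / (p - 1) + 1 / (p - 1) ^ 2)) ∧
    (1 / (2 * p)) *
        (-3 - 1 / (p - 1) + Real.sqrt (33 + 30 / (p - 1) + 1 / (p - 1) ^ 2)) >
      1 / (p - 1) := by
  obtain ⟨s, rfl⟩ : ∃ s, p = s + 1 := ⟨p - 1, by ring⟩
  have hrw : s + 1 - 1 = s := by ring
  rw [hrw]
  have hs : (1 : ℝ) < s := by linarith
  have hs0 : (0 : ℝ) < s := by linarith
  have hsne : s ≠ 0 := ne_of_gt hs0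
  have hp0 : (0 : ℝ) < s + 1 := by linarith
  have hQ : (0 : ℝ) ≤ 1 + 14 / s + 1 / s ^ 2 := by positivity
  have hS : (0 : ℝ) ≤ 33 + 30 / s + 1 / s ^ 2 := by positivity
  obtain ⟨a, had⟩ : ∃ a, a = Real.sqrt (1 + 14 / s + 1 / s ^ 2) := ⟨_, rfl⟩
  obtain ⟨b, hbd⟩ : ∃ b, b = Real.sqrt (33 + 30 / s + 1 / s ^ 2) := ⟨_, rfl⟩
  rw [← had, ← hbd]
  have ha2 : a ^ 2 = 1 + 14 / s + 1 / s ^ 2 := by rw [had]; exact Real.sq_sqrt hQ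
  have hb2 : b ^ 2 = 33 + 30 / s + 1 / s ^ 2 := by rw [hbd]; exact Real.sq_sqrt hS
  have ha0 : 0 ≤ a := had ▸ Real.sqrt_nonneg _
  have hb0 : 0 ≤ b := hbd ▸ Real.sqrt_nonneg _
  obtain ⟨u, hud⟩ : ∃ u, u = s * a := ⟨_, rfl⟩
  obtain ⟨v, hvd⟩ : ∃ v, v = s * b := ⟨_, rfl⟩
  have hu : u ^ 2 = s ^ 2 + 14 * s + 1 := by
    rw [hud, mul_pow, ha2]; field_simp
  have hv : v ^ 2 = 33 * s ^ 2 + 30 * s + 1 := by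
    rw [hvd, mul_pow, hb2]; field_simp
  have hu0 : 0 ≤ u := by rw [hud]; positivity
  have hv0 : 0 ≤ v := by rw [hvd]; positivity
  have hugt : s + 1 < u := by
    have h1 : (s + 1) ^ 2 < u ^ 2 := by rw [hu]; nlinarith
    exact lt_of_pow_lt_pow_left₀ 2 hu0 h1
  have hvgt : 5 * s + 3 < v := by
    have h1 : (5 * s + 3) ^ 2 < v ^ 2 := by rw [hv]; nlinarith
    exact lt_of_pow_lt_pow_left₀ 2 hv0 h1
  -- second inequality
  have expand2 : (1 / (2 * (s + 1))) * (-3 - 1 / s + b) - 1 / s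
      = (v - (5 * s + 3)) / (2 * s * (s + 1)) := by
    rw [hvd]; field_simp; ring
  have h2 : (1 / (2 * (s + 1))) * (-3 - 1 / s + b) > 1 / s := by
    have hpos : 0 < (v - (5 * s + 3)) / (2 * s * (s + 1)) := by
      apply div_pos (by linarith) (by positivity)
    linarith [expand2 ▸ hpos]
  refine ⟨?_, h2⟩
  -- first inequality
  have expand1 : (1 / 6) * ((s + 1) / s + a) - (1 / (2 * (s + 1))) * (-3 - 1 / s + b)
      = (s ^ 2 + 11 * s + 4 + (s + 1) * u - 3 * v) / (6 * (s * (s + 1))) := by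
    rw [hud, hvd]; field_simp; ring
  have hP' : 0 < (s + 1) * u + 3 * v - (s ^ 2 + 11 * s + 4) := by
    nlinarith [mul_lt_mul_of_pos_left hugt (show (0:ℝ) < s + 1 by linarith)]
  have hGP : (s ^ 2 + 11 * s + 4 + (s + 1) * u - 3 * v)
        * ((s + 1) * u + 3 * v - (s ^ 2 + 11 * s + 4))
      = 6 * (s ^ 2 + 11 * s + 4) * v - 6 * (s ^ 3 + 66 * s ^ 2 + 57 * s + 4) := by
    linear_combination (s + 1) ^ 2 * hu - 9 * hv
  have hquartic : 0 < 2 * s ^ 4 + 41 * s ^ 3 + 69 * s ^ 2 + 23 * s - 7 := by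
    have h2 : (1:ℝ) < s ^ 2 := by nlinarith
    have h3 : (1:ℝ) < s ^ 3 := by nlinarith
    have h4 : (1:ℝ) < s ^ 4 := by nlinarith
    linarith
  have hfac : 0 < 576 * (s * ((s - 1) * (2 * s ^ 4 + 41 * s ^ 3 + 69 * s ^ 2 + 23 * s - 7))) := by
    have := mul_pos hs0 (mul_pos (show (0:ℝ) < s - 1 by linarith) hquartic)
    linarith
  have key : (6 * (s ^ 3 + 66 * s ^ 2 + 57 * s + 4)) ^ 2
      < (6 * (s ^ 2 + 11 * s + 4) * v) ^ 2 := by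
    have hvv : (6 * (s ^ 2 + 11 * s + 4) * v) ^ 2
        = 36 * (s ^ 2 + 11 * s + 4) ^ 2 * (33 * s ^ 2 + 30 * s + 1) := by
      rw [mul_pow, mul_pow, hv]; ring
    rw [hvv]; nlinarith [hfac]
  have hCpos : 0 < 6 * (s ^ 2 + 11 * s + 4) * v - 6 * (s ^ 3 + 66 * s ^ 2 + 57 * s + 4) := by
    have h6 : 0 ≤ 6 * (s ^ 2 + 11 * s + 4) * v := by positivity
    have := lt_of_pow_lt_pow_left₀ 2 h6 key
    linarith
  have hG : 0 < s ^ 2 + 11 * s + 4 + (s + 1) * u - 3 * v := by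
    by_contra h
    push_neg at h
    nlinarith [mul_nonpos_of_nonpos_of_nonneg h (le_of_lt hP')]
  have hpos1 : 0 < (s ^ 2 + 11 * s + 4 + (s + 1) * u - 3 * v) / (6 * (s * (s + 1))) := by
    apply div_pos hG (by positivity)
  linarith [expand1 ▸ hpos1]
end
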